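/- Let V be a 5-dimensional complex vector space with a fixed isomorphism ∧⁵V ≅ ℂ. For every nonzero vector v ∈ V, the quadratic form P_v on ∧²V defined by P_v(x) = v ∧ x ∧ x (viewed in ∧⁵V ≅ ℂ) has rank exactly 6. -/

import Mathlib

open ExteriorAlgebra

namespace Stmt0

variable {V : Type*} [AddCommGroup V] [Module ℂ V]

theorem iota_mem (v : V) : (ι ℂ v : ExteriorAlgebra ℂ V) ∈ ⋀[ℂ]^1 V := by
  simpa only [pow_one] using LinearMap.mem_range_self _ v

/-- The degree-5 wedge `v ∧ x ∧ y` for `x y ∈ ⋀²V`, as an element of `⋀⁵V`. -/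
noncomputable def wedge5 (v : V) (x y : ⋀[ℂ]^2 V) : ⋀[ℂ]^5 V :=
  ⟨ι ℂ v * x.1 * y.1, by
    have h : (ι ℂ v * x.1) * y.1 ∈ ⋀[ℂ]^(1 + 2 + 2) V :=
      SetLike.mul_mem_graded (SetLike.mul_mem_graded (iota_mem v) x.2) y.2
    simpa using h⟩

/-- The symmetric bilinear form `B_v(x,y) = v ∧ x ∧ y` on `⋀²V`, obtained by composing the
wedge product with a fixed trivialization `e : ⋀⁵V ≃ ℂ`. -/
noncomputable def wedgeForm (e : (⋀[ℂ]^5 V) ≃ₗ[ℂ] ℂ) (v : V) :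
    (⋀[ℂ]^2 V) →ₗ[ℂ] (⋀[ℂ]^2 V) →ₗ[ℂ] ℂ :=
  LinearMap.mk₂ ℂ (fun x y => e (wedge5 v x y))
    (fun x x' y => by
      simp only [wedge5, ← map_add]
      congr 1
      ext
      simp [mul_add, add_mul])
    (fun c x y => by
      simp only [wedge5, ← map_smul]
      congr 1
      ext
      simp [Algebra.smul_mul_assoc])
    (fun x y y' => by
      simp only [wedge5, ← map_add]
      congr 1
      ext
      simp [mul_add])
    (fun c x y => by
      simp only [wedge5, ← map_smul]
      congr 1
      ext
      simp [Algebra.mul_smul_comm])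

-- ## auxiliary
lemma mem2 (x y : V) : (ι ℂ x * ι ℂ y : ExteriorAlgebra ℂ V) ∈ ⋀[ℂ]^2 V := by
  have h : (ι ℂ x * ι ℂ y) ∈ ⋀[ℂ]^(1+1) V :=
    SetLike.mul_mem_graded (iota_mem x) (iota_mem y)
  simpa using h

lemma mem5' (m : Fin 5 → V) : ιMulti ℂ 5 m ∈ ⋀[ℂ]^5 V :=
  ExteriorAlgebra.ιMulti_range ℂ 5 ⟨m, rfl⟩

noncomputable def wpair : V →ₗ[ℂ] V →ₗ[ℂ] ⋀[ℂ]^2 V :=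
  LinearMap.mk₂ ℂ (fun x y => ⟨ι ℂ x * ι ℂ y, mem2 x y⟩)
    (fun x x' y => Subtype.ext (by simp [add_mul]))
    (fun c x y => Subtype.ext (by simp))
    (fun x y y' => Subtype.ext (by simp [mul_add]))
    (fun c x y => Subtype.ext (by simp))

@[simp] lemma wpair_coe (x y : V) :
    ((wpair x y : ⋀[ℂ]^2 V) : ExteriorAlgebra ℂ V) = ι ℂ x * ι ℂ y := rfl

lemma wf_apply (e : (⋀[ℂ]^5 V) ≃ₗ[ℂ] ℂ) (v : V) (x y : ⋀[ℂ]^2 V) :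
    wedgeForm e v x y = e (wedge5 v x y) := rfl

lemma kill1 (x z : V) : ι ℂ x * (ι ℂ x * ι ℂ z) = (0 : ExteriorAlgebra ℂ V) := by
  rw [← mul_assoc, ι_sq_zero, zero_mul]

lemma swap_mul (x z : V) : ι ℂ z * ι ℂ x = -(ι ℂ x * ι ℂ z : ExteriorAlgebra ℂ V) := by
  exact eq_neg_of_add_eq_zero_right (ι_add_mul_swap x z)

lemma kill2 (x z : V) : ι ℂ x * (ι ℂ z * ι ℂ x) = (0 : ExteriorAlgebra ℂ V) := by
  rw [swap_mul, mul_neg, kill1, neg_zero]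

lemma wf_eq_zero (e : (⋀[ℂ]^5 V) ≃ₗ[ℂ] ℂ) (v : V) (x : ⋀[ℂ]^2 V)
    (h : ι ℂ v * (x : ExteriorAlgebra ℂ V) = 0) : wedgeForm e v x = 0 := by
  refine LinearMap.ext fun y => ?_
  rw [wf_apply]
  have h0 : wedge5 v x y = 0 := Subtype.ext (by show ι ℂ v * x.1 * y.1 = 0; rw [h, zero_mul])
  rw [h0, map_zero]
  rfl

lemma wf_swap (e : (⋀[ℂ]^5 V) ≃ₗ[ℂ] ℂ) (v x z : V) :
    wedgeForm e v (wpair z x) = - wedgeForm e v (wpair x z) := by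
  refine LinearMap.ext fun y => ?_
  rw [LinearMap.neg_apply, wf_apply, wf_apply]
  have h0 : wedge5 v (wpair z x) y = - wedge5 v (wpair x z) y := by
    apply Subtype.ext
    show ι ℂ v * (ι ℂ z * ι ℂ x) * y.1 = -(ι ℂ v * (ι ℂ x * ι ℂ z) * y.1)
    rw [swap_mul, mul_neg, neg_mul]
  rw [h0, map_neg]

section WithBasis
variable (e : (⋀[ℂ]^5 V) ≃ₗ[ℂ] ℂ) (b : Module.Basis (Fin 5) ℂ V)

noncomputable def topE : ⋀[ℂ]^5 V := ⟨ιMulti ℂ 5 ⇑b, mem5' _⟩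

set_option maxRecDepth 10000 in
lemma top_ne_zero : ιMulti ℂ 5 ⇑b ≠ 0 := by
  intro h0
  have h1 := congrArg (liftAlternating (R := ℂ) (M := V) (N := ℂ)
      (Function.update (fun n => (0 : V [⋀^Fin n]→ₗ[ℂ] ℂ)) 5 b.det)) h0
  rw [liftAlternating_apply_ιMulti, map_zero, Function.update_self, Module.Basis.det_self] at h1
  exact one_ne_zero h1

lemma c_ne_zero : e (topE b) ≠ 0 := by
  intro h
  have h2 : topE b = 0 := by
    apply e.injective
    rw [h, LinearEquiv.map_zero]
  exact top_ne_zero b (congrArg Subtype.val h2)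

lemma eval_eq (i j k l : Fin 5) :
    wedgeForm e (b 0) (wpair (b i) (b j)) (wpair (b k) (b l))
      = e ⟨ιMulti ℂ 5 (fun t => b (![0,i,j,k,l] t)), mem5' _⟩ := by
  rw [wf_apply]
  congr 1
  apply Subtype.ext
  show ι ℂ (b 0) * (ι ℂ (b i) * ι ℂ (b j)) * (ι ℂ (b k) * ι ℂ (b l))
    = (ιMulti ℂ 5 (fun t => b (![0, i, j, k, l] t)) : ExteriorAlgebra ℂ V)
  rw [ιMulti_apply]
  simp [List.ofFn_succ, mul_assoc]

lemma eval_zero {i j k l : Fin 5} (h : ¬ Function.Injective ![(0 : Fin 5), i, j, k, l]) :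
    wedgeForm e (b 0) (wpair (b i) (b j)) (wpair (b k) (b l)) = 0 := by
  rw [eval_eq]
  have hni : ¬ Function.Injective (fun t => b (![(0 : Fin 5), i, j, k, l] t)) := by
    intro hinj
    exact h fun a c hac => hinj (show b _ = b _ from congrArg b hac)
  have h0 : ιMulti ℂ 5 (fun t => b (![(0 : Fin 5), i, j, k, l] t)) = 0 :=
    AlternatingMap.map_eq_zero_of_not_injective _ _ hni
  have h4 : (⟨ιMulti ℂ 5 (fun t => b (![(0 : Fin 5), i, j, k, l] t)), mem5' _⟩ : ⋀[ℂ]^5 V) = 0 :=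
    Subtype.ext h0
  rw [h4, LinearEquiv.map_zero]

lemma eval_perm {i j k l : Fin 5} (σ : Equiv.Perm (Fin 5))
    (h : ∀ t, (![0, i, j, k, l] : Fin 5 → Fin 5) t = σ t) :
    wedgeForm e (b 0) (wpair (b i) (b j)) (wpair (b k) (b l))
      = ((Equiv.Perm.sign σ : ℤ) : ℂ) * e (topE b) := by
  rw [eval_eq]
  have h2 : (fun t => b (![(0 : Fin 5), i, j, k, l] t)) = (⇑b ∘ ⇑σ) :=
    funext fun t => by rw [h t]; rfl
  have h3 : ιMulti ℂ 5 (fun t => b (![(0 : Fin 5), i, j, k, l] t))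
      = ((Equiv.Perm.sign σ : ℤ) : ℂ) • ιMulti ℂ 5 ⇑b := by
    rw [h2, AlternatingMap.map_perm, Units.smul_def, ← Int.cast_smul_eq_zsmul ℂ]
  have h4 : (⟨ιMulti ℂ 5 (fun t => b (![(0 : Fin 5), i, j, k, l] t)), mem5' _⟩ : ⋀[ℂ]^5 V)
      = ((Equiv.Perm.sign σ : ℤ) : ℂ) • topE b := by
    apply Subtype.ext
    rw [Submodule.coe_smul]
    exact h3
  rw [h4, LinearEquiv.map_smul, smul_eq_mul]


def pr1 : Fin 6 → Fin 5 := ![1, 1, 1, 2, 2, 3]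
def pr2 : Fin 6 → Fin 5 := ![2, 3, 4, 3, 4, 4]

noncomputable def fGen (k : Fin 6) : (⋀[ℂ]^2 V) →ₗ[ℂ] ℂ :=
  wedgeForm e (b 0) (wpair (b (pr1 k)) (b (pr2 k)))

noncomputable def SGen : Submodule ℂ ((⋀[ℂ]^2 V) →ₗ[ℂ] ℂ) :=
  Submodule.span ℂ (Set.range (fGen e b))

lemma eval_pos {i j k l : Fin 5} (σ : Equiv.Perm (Fin 5))
    (h : ∀ t, (![0, i, j, k, l] : Fin 5 → Fin 5) t = σ t) (hs : Equiv.Perm.sign σ = 1) :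
    wedgeForm e (b 0) (wpair (b i) (b j)) (wpair (b k) (b l)) = e (topE b) := by
  rw [eval_perm e b σ h, hs]
  norm_num

lemma eval_neg {i j k l : Fin 5} (σ : Equiv.Perm (Fin 5))
    (h : ∀ t, (![0, i, j, k, l] : Fin 5 → Fin 5) t = σ t) (hs : Equiv.Perm.sign σ = -1) :
    wedgeForm e (b 0) (wpair (b i) (b j)) (wpair (b k) (b l)) = - e (topE b) := by
  rw [eval_perm e b σ h, hs]
  norm_num

lemma lin_indep : LinearIndependent ℂ (fGen e b) := by
  rw [Fintype.linearIndependent_iff]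
  intro g hg
  have hc := c_ne_zero e b
  have H := fun (y : ⋀[ℂ]^2 V) => congrArg (fun φ : (⋀[ℂ]^2 V) →ₗ[ℂ] ℂ => φ y) hg
  simp only [LinearMap.sum_apply, LinearMap.smul_apply, smul_eq_mul, LinearMap.zero_apply] at H
  intro k
  fin_cases k
  · have h0 := H (wpair (b 3) (b 4))
    rw [Fin.sum_univ_six] at h0
    have z0 : fGen e b 0 (wpair (b 3) (b 4)) = e (topE b) :=
      eval_pos e b ⟨![0,1,2,3,4], ![0,1,2,3,4], by decide, by decide⟩ (by decide) (by decide)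
    have z1 : fGen e b 1 (wpair (b 3) (b 4)) = 0 := eval_zero e b (by decide)
    have z2 : fGen e b 2 (wpair (b 3) (b 4)) = 0 := eval_zero e b (by decide)
    have z3 : fGen e b 3 (wpair (b 3) (b 4)) = 0 := eval_zero e b (by decide)
    have z4 : fGen e b 4 (wpair (b 3) (b 4)) = 0 := eval_zero e b (by decide)
    have z5 : fGen e b 5 (wpair (b 3) (b 4)) = 0 := eval_zero e b (by decide)
    rw [z0, z1, z2, z3, z4, z5] at h0
    simp only [mul_zero, zero_add, add_zero, mul_neg, neg_eq_zero] at h0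
    exact (mul_eq_zero.1 h0).resolve_right hc
  · have h0 := H (wpair (b 2) (b 4))
    rw [Fin.sum_univ_six] at h0
    have z0 : fGen e b 0 (wpair (b 2) (b 4)) = 0 := eval_zero e b (by decide)
    have z1 : fGen e b 1 (wpair (b 2) (b 4)) = - e (topE b) :=
      eval_neg e b ⟨![0,1,3,2,4], ![0,1,3,2,4], by decide, by decide⟩ (by decide) (by decide)
    have z2 : fGen e b 2 (wpair (b 2) (b 4)) = 0 := eval_zero e b (by decide)
    have z3 : fGen e b 3 (wpair (b 2) (b 4)) = 0 := eval_zero e b (by decide)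
    have z4 : fGen e b 4 (wpair (b 2) (b 4)) = 0 := eval_zero e b (by decide)
    have z5 : fGen e b 5 (wpair (b 2) (b 4)) = 0 := eval_zero e b (by decide)
    rw [z0, z1, z2, z3, z4, z5] at h0
    simp only [mul_zero, zero_add, add_zero, mul_neg, neg_eq_zero] at h0
    exact (mul_eq_zero.1 h0).resolve_right hc
  · have h0 := H (wpair (b 2) (b 3))
    rw [Fin.sum_univ_six] at h0
    have z0 : fGen e b 0 (wpair (b 2) (b 3)) = 0 := eval_zero e b (by decide)
    have z1 : fGen e b 1 (wpair (b 2) (b 3)) = 0 := eval_zero e b (by decide)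
    have z2 : fGen e b 2 (wpair (b 2) (b 3)) = e (topE b) :=
      eval_pos e b ⟨![0,1,4,2,3], ![0,1,3,4,2], by decide, by decide⟩ (by decide) (by decide)
    have z3 : fGen e b 3 (wpair (b 2) (b 3)) = 0 := eval_zero e b (by decide)
    have z4 : fGen e b 4 (wpair (b 2) (b 3)) = 0 := eval_zero e b (by decide)
    have z5 : fGen e b 5 (wpair (b 2) (b 3)) = 0 := eval_zero e b (by decide)
    rw [z0, z1, z2, z3, z4, z5] at h0
    simp only [mul_zero, zero_add, add_zero, mul_neg, neg_eq_zero] at h0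
    exact (mul_eq_zero.1 h0).resolve_right hc
  · have h0 := H (wpair (b 1) (b 4))
    rw [Fin.sum_univ_six] at h0
    have z0 : fGen e b 0 (wpair (b 1) (b 4)) = 0 := eval_zero e b (by decide)
    have z1 : fGen e b 1 (wpair (b 1) (b 4)) = 0 := eval_zero e b (by decide)
    have z2 : fGen e b 2 (wpair (b 1) (b 4)) = 0 := eval_zero e b (by decide)
    have z3 : fGen e b 3 (wpair (b 1) (b 4)) = e (topE b) :=
      eval_pos e b ⟨![0,2,3,1,4], ![0,3,1,2,4], by decide, by decide⟩ (by decide) (by decide)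
    have z4 : fGen e b 4 (wpair (b 1) (b 4)) = 0 := eval_zero e b (by decide)
    have z5 : fGen e b 5 (wpair (b 1) (b 4)) = 0 := eval_zero e b (by decide)
    rw [z0, z1, z2, z3, z4, z5] at h0
    simp only [mul_zero, zero_add, add_zero, mul_neg, neg_eq_zero] at h0
    exact (mul_eq_zero.1 h0).resolve_right hc
  · have h0 := H (wpair (b 1) (b 3))
    rw [Fin.sum_univ_six] at h0
    have z0 : fGen e b 0 (wpair (b 1) (b 3)) = 0 := eval_zero e b (by decide)
    have z1 : fGen e b 1 (wpair (b 1) (b 3)) = 0 := eval_zero e b (by decide)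
    have z2 : fGen e b 2 (wpair (b 1) (b 3)) = 0 := eval_zero e b (by decide)
    have z3 : fGen e b 3 (wpair (b 1) (b 3)) = 0 := eval_zero e b (by decide)
    have z4 : fGen e b 4 (wpair (b 1) (b 3)) = - e (topE b) :=
      eval_neg e b ⟨![0,2,4,1,3], ![0,3,1,4,2], by decide, by decide⟩ (by decide) (by decide)
    have z5 : fGen e b 5 (wpair (b 1) (b 3)) = 0 := eval_zero e b (by decide)
    rw [z0, z1, z2, z3, z4, z5] at h0
    simp only [mul_zero, zero_add, add_zero, mul_neg, neg_eq_zero] at h0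
    exact (mul_eq_zero.1 h0).resolve_right hc
  · have h0 := H (wpair (b 1) (b 2))
    rw [Fin.sum_univ_six] at h0
    have z0 : fGen e b 0 (wpair (b 1) (b 2)) = 0 := eval_zero e b (by decide)
    have z1 : fGen e b 1 (wpair (b 1) (b 2)) = 0 := eval_zero e b (by decide)
    have z2 : fGen e b 2 (wpair (b 1) (b 2)) = 0 := eval_zero e b (by decide)
    have z3 : fGen e b 3 (wpair (b 1) (b 2)) = 0 := eval_zero e b (by decide)
    have z4 : fGen e b 4 (wpair (b 1) (b 2)) = 0 := eval_zero e b (by decide)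
    have z5 : fGen e b 5 (wpair (b 1) (b 2)) = e (topE b) :=
      eval_pos e b ⟨![0,3,4,1,2], ![0,3,4,1,2], by decide, by decide⟩ (by decide) (by decide)
    rw [z0, z1, z2, z3, z4, z5] at h0
    simp only [mul_zero, zero_add, add_zero, mul_neg, neg_eq_zero] at h0
    exact (mul_eq_zero.1 h0).resolve_right hc


lemma mem_SGen_pair (k : Fin 6) :
    wedgeForm e (b 0) (wpair (b (pr1 k)) (b (pr2 k))) ∈ SGen e b :=
  Submodule.subset_span ⟨k, rfl⟩

lemma zero_left (j : Fin 5) : wedgeForm e (b 0) (wpair (b 0) (b j)) = 0 :=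
  wf_eq_zero e _ _ (by rw [wpair_coe]; exact kill1 _ _)

lemma zero_right (i : Fin 5) : wedgeForm e (b 0) (wpair (b i) (b 0)) = 0 :=
  wf_eq_zero e _ _ (by rw [wpair_coe]; exact kill2 _ _)

lemma zero_diag (i : Fin 5) : wedgeForm e (b 0) (wpair (b i) (b i)) = 0 :=
  wf_eq_zero e _ _ (by rw [wpair_coe, ι_sq_zero, mul_zero])

lemma fin5_cases : ∀ m : Fin 5, m = 0 ∨ m = 1 ∨ m = 2 ∨ m = 3 ∨ m = 4 := by decide

lemma base_mem (i j : Fin 5) : wedgeForm e (b 0) (wpair (b i) (b j)) ∈ SGen e b := by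
  rcases fin5_cases i with rfl | rfl | rfl | rfl | rfl <;>
    rcases fin5_cases j with rfl | rfl | rfl | rfl | rfl <;>
    first
      | (rw [zero_diag]; exact zero_mem _)
      | (rw [zero_left]; exact zero_mem _)
      | (rw [zero_right]; exact zero_mem _)
      | exact mem_SGen_pair e b 0
      | exact mem_SGen_pair e b 1
      | exact mem_SGen_pair e b 2
      | exact mem_SGen_pair e b 3
      | exact mem_SGen_pair e b 4
      | exact mem_SGen_pair e b 5
      | (rw [wf_swap]; exact neg_mem (mem_SGen_pair e b 0))
      | (rw [wf_swap]; exact neg_mem (mem_SGen_pair e b 1))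
      | (rw [wf_swap]; exact neg_mem (mem_SGen_pair e b 2))
      | (rw [wf_swap]; exact neg_mem (mem_SGen_pair e b 3))
      | (rw [wf_swap]; exact neg_mem (mem_SGen_pair e b 4))
      | (rw [wf_swap]; exact neg_mem (mem_SGen_pair e b 5))

lemma wf_wpair_mem (a c : V) : wedgeForm e (b 0) (wpair a c) ∈ SGen e b := by
  rw [← b.sum_repr a, ← b.sum_repr c]
  simp only [map_sum, map_smul, LinearMap.sum_apply, LinearMap.smul_apply]
  refine Submodule.sum_mem _ fun i _ => ?_
  refine Submodule.smul_mem _ _ ?_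
  refine Submodule.sum_mem _ fun j _ => ?_
  exact Submodule.smul_mem _ _ (base_mem e b j i)

lemma range_le : LinearMap.range (wedgeForm e (b 0)) ≤ SGen e b := by
  rintro _ ⟨x, rfl⟩
  have hconv : ∀ {z : ExteriorAlgebra ℂ V},
      z ∈ Submodule.span ℂ (Set.range (ιMulti ℂ 2)) → z ∈ ⋀[ℂ]^2 V := fun hz => by
    rwa [ιMulti_span_fixedDegree] at hz
  have hx : (x : ExteriorAlgebra ℂ V) ∈ Submodule.span ℂ (Set.range (ιMulti ℂ 2)) := by
    rw [ιMulti_span_fixedDegree]; exact x.2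
  have key : ∀ (z : ExteriorAlgebra ℂ V),
      z ∈ Submodule.span ℂ (Set.range (ιMulti ℂ 2)) →
      ∀ h2 : z ∈ ⋀[ℂ]^2 V, wedgeForm e (b 0) ⟨z, h2⟩ ∈ SGen e b := by
    intro z hz
    induction hz using Submodule.span_induction with
    | mem w hw =>
      obtain ⟨m, rfl⟩ := hw
      intro h2
      have hrw : (⟨ιMulti ℂ 2 m, h2⟩ : ⋀[ℂ]^2 V) = wpair (m 0) (m 1) := by
        apply Subtype.ext
        show (ιMulti ℂ 2 m : ExteriorAlgebra ℂ V) = ι ℂ (m 0) * ι ℂ (m 1)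
        rw [ιMulti_apply]
        simp [List.ofFn_succ, mul_assoc]
      rw [hrw]
      exact wf_wpair_mem e b _ _
    | zero =>
      intro h2
      have : (⟨(0 : ExteriorAlgebra ℂ V), h2⟩ : ⋀[ℂ]^2 V) = 0 := rfl
      rw [this, map_zero]
      exact zero_mem _
    | add w₁ w₂ hw₁ hw₂ ih₁ ih₂ =>
      intro h2
      have : (⟨w₁ + w₂, h2⟩ : ⋀[ℂ]^2 V) = ⟨w₁, hconv hw₁⟩ + ⟨w₂, hconv hw₂⟩ := rfl
      rw [this, map_add]
      exact add_mem (ih₁ _) (ih₂ _)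
    | smul c w hw ih =>
      intro h2
      have : (⟨c • w, h2⟩ : ⋀[ℂ]^2 V) = c • (⟨w, hconv hw⟩ : ⋀[ℂ]^2 V) := rfl
      rw [this, map_smul]
      exact Submodule.smul_mem _ _ (ih _)
  exact key x.1 hx x.2

lemma range_eq : LinearMap.range (wedgeForm e (b 0)) = SGen e b := by
  refine le_antisymm (range_le e b) ?_
  rw [SGen, Submodule.span_le]
  rintro _ ⟨k, rfl⟩
  exact LinearMap.mem_range_self _ _

lemma finrank_range_six : Module.finrank ℂ (LinearMap.range (wedgeForm e (b 0))) = 6 := by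
  rw [range_eq]
  have h := finrank_span_eq_card (lin_indep e b)
  simp only [Fintype.card_fin] at h
  unfold SGen
  convert h

end WithBasis

/-- on a 5-dimensional complex vector space with a fixed trivialization of
`⋀⁵V`, the (quadratic form associated to the) symmetric bilinear form
`B_v(x,y) = v ∧ x ∧ y` on the 10-dimensional space `⋀²V` has rank exactly `6`, for every
nonzero `v`.  (The rank of a bilinear form is the rank of the induced map to the dual,
i.e. the dimension of its range.) -/
theorem rank_wedgeForm_eq_six [FiniteDimensional ℂ V]
    (h5 : Module.finrank ℂ V = 5) (e : (⋀[ℂ]^5 V) ≃ₗ[ℂ] ℂ)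
    (v : V) (hv : v ≠ 0) :
    Module.finrank ℂ (LinearMap.range (wedgeForm e v)) = 6 := by
  classical
  have hs : LinearIndepOn ℂ id ({v} : Set V) :=
    LinearIndepOn.singleton hv
  let B0 := Module.Basis.extend hs
  haveI : Fintype (hs.extend (Set.subset_univ ({v} : Set V))) :=
    FiniteDimensional.fintypeBasisIndex B0
  have hcard : Fintype.card (hs.extend (Set.subset_univ ({v} : Set V))) = 5 := by
    rw [← Module.finrank_eq_card_basis B0, h5]
  let g := (Fintype.equivFinOfCardEq hcard).symm
  have hv' : v ∈ hs.extend (Set.subset_univ ({v} : Set V)) :=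
    hs.subset_extend _ rfl
  let vt : ↥(hs.extend (Set.subset_univ ({v} : Set V))) := ⟨v, hv'⟩
  let g' := (Equiv.swap (0 : Fin 5) (g.symm vt)).trans g
  let b : Module.Basis (Fin 5) ℂ V := B0.reindex g'.symm
  have hb0 : b 0 = v := by
    have h1 : b 0 = B0 (g' 0) := by simp [b, Module.Basis.reindex_apply]
    have h2 : g' 0 = vt := by simp [g', Equiv.swap_apply_left]
    rw [h1, h2]
    exact Module.Basis.extend_apply_self hs vt
  rw [← hb0]
  exact finrank_range_six e b

end Stmt0
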